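/- Let F be an ordered field, let I ⊆ F be a convex additive subgroup that is multiplicatively idempotent (I·I = I, where I·I is the set of products), and let r, s ∈ F with 0 < r < s. If the sets rI = {r·i : i ∈ I} and sI are equal, then the sets r⁻¹I and s⁻¹I are equal. -/

import Mathlib

open Pointwise

theorem stmt9 (F : Type*) [Field F] [LinearOrder F] [IsStrictOrderedRing F] (I : AddSubgroup F)
    (hconv : ∀ x ∈ I, ∀ y ∈ I, ∀ z : F, x ≤ z → z ≤ y → z ∈ I)
    (hidem : (I : Set F) * (I : Set F) = (I : Set F))
    (r s : F) (hr : 0 < r) (hrs : r < s)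
    (h : r • (I : Set F) = s • (I : Set F)) :
    r⁻¹ • (I : Set F) = s⁻¹ • (I : Set F) := by
  have hs : (0:F) < s := hr.trans hrs
  have key : ((r*s)⁻¹) • (r • (I : Set F)) = ((r*s)⁻¹) • (s • (I : Set F)) := by rw [h]
  rw [smul_smul, smul_smul] at key
  have h1 : (r*s)⁻¹ * r = s⁻¹ := by field_simp
  have h2 : (r*s)⁻¹ * s = r⁻¹ := by field_simp
  rw [h1, h2] at key
  exact key.symm
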